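/- Let $b\ge2$, $n\ge1$, and let $\{p_k\}_{k=1}^n\subseteq(0,1]$. Let $\{Y_x: x\in\bigcup_{k=1}^n\{1,\dots,b\}^k\}$ be independent $\{0,1\}$-valued random variables with $P(Y_x=1)=p_k$ for $x\in\{1,\dots,b\}^k$, and for $x=(x_1,\dots,x_n)\in\{1,\dots,b\}^n$ set $Z_x:=\prod_{i=1}^n Y_{(x_1,\dots,x_i)}$. Then for every $h:\{1,\dots,b\}^n\to[0,\infty)$ and every $\lambda\in(0,1)$, with $q:=\prod_{k=1}^n p_k$, $E\bigl(e^{-\sum_x h(x)Z_x}\bigr)\le\frac{1}{\lambda^2}\frac{1-q}{q}+\exp\bigl\{-(1-\lambda)q\sum_x h(x)\bigr\}$. -/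

import Mathlib

open MeasureTheory ProbabilityTheory

/-- Vertices of the `b`-ary tree at levels `1,…,n`: a level `k+1` vertex (for `k : Fin n`)
is a sequence `Fin (k+1) → Fin b`. -/
abbrev TreeVertex (b n : ℕ) := Σ k : Fin n, (Fin ((k : ℕ) + 1) → Fin b)

/-- `Zind Y x ω` is the indicator that all Bernoulli variables along the path from the
root to the leaf `x` equal one: `Z_x = ∏_{i=1}^n Y_{(x_1,…,x_i)}`. -/
noncomputable def Zind {b n : ℕ} {Ω : Type*} (Y : TreeVertex b n → Ω → Bool)
    (x : Fin n → Fin b) (ω : Ω) : ℝ :=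
  ∏ k : Fin n,
    (if Y ⟨k, fun i => x ⟨(i : ℕ), lt_of_lt_of_le i.isLt (Nat.succ_le_of_lt k.isLt)⟩⟩ ω
        = true then (1 : ℝ) else 0)

/-- Reverse-Jensen bound for tree-indexed Bernoulli variables:
with `q = ∏_{k=1}^n p_k`, for every `h ≥ 0` and `λ ∈ (0,1)`,
`E(e^{-∑_x h(x) Z_x}) ≤ λ⁻² (1-q)/q + exp{-(1-λ) q ∑_x h(x)}`. -/
theorem stmt13 {Ω : Type*} [MeasurableSpace Ω] (P : Measure Ω) [IsProbabilityMeasure P]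
    (b n : ℕ) (hb : 2 ≤ b) (hn : 1 ≤ n) (p : ℕ → ℝ)
    (hp : ∀ k, 1 ≤ k → k ≤ n → 0 < p k ∧ p k ≤ 1)
    (Y : TreeVertex b n → Ω → Bool) (hYm : ∀ v, Measurable (Y v))
    (hind : iIndepFun (m := fun _ => ⊤) Y P)
    (hlaw : ∀ v : TreeVertex b n,
      P {ω | Y v ω = true} = ENNReal.ofReal (p ((v.1 : ℕ) + 1)))
    (h : (Fin n → Fin b) → ℝ) (hh : ∀ x, 0 ≤ h x)
    (lam : ℝ) (hlam : lam ∈ Set.Ioo (0 : ℝ) 1) :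
    ∫ ω, Real.exp (-∑ x, h x * Zind Y x ω) ∂P ≤
      1 / lam ^ 2 * ((1 - ∏ k ∈ Finset.Icc 1 n, p k) / ∏ k ∈ Finset.Icc 1 n, p k) +
        Real.exp (-(1 - lam) * (∏ k ∈ Finset.Icc 1 n, p k) * ∑ x, h x) := by
  obtain ⟨hlam0, hlam1⟩ := hlam
  set q := ∏ k ∈ Finset.Icc 1 n, p k with hqdef
  have hq0 : 0 < q := Finset.prod_pos fun k hk =>
    (hp k (Finset.mem_Icc.mp hk).1 (Finset.mem_Icc.mp hk).2).1
  have hq1 : q ≤ 1 := Finset.prod_le_one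
    (fun k hk => (hp k (Finset.mem_Icc.mp hk).1 (Finset.mem_Icc.mp hk).2).1.le)
    (fun k hk => (hp k (Finset.mem_Icc.mp hk).1 (Finset.mem_Icc.mp hk).2).2)
  set H := ∑ x, h x with hHdef
  have hH0 : 0 ≤ H := Finset.sum_nonneg fun x _ => hh x
  set S := fun ω => ∑ x, h x * Zind Y x ω with hSdef
  -- basic bounds on Zind
  have hZ0 : ∀ x ω, 0 ≤ Zind Y x ω := fun x ω =>
    Finset.prod_nonneg fun k _ => by split <;> norm_num
  have hZ1 : ∀ x ω, Zind Y x ω ≤ 1 := fun x ω =>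
    Finset.prod_le_one (fun k _ => by split <;> norm_num) (fun k _ => by split <;> norm_num)
  have hZm : ∀ x, Measurable (Zind Y x) := by
    intro x
    apply Finset.measurable_prod
    intro k _
    exact Measurable.ite ((hYm _) (measurableSet_singleton true)) measurable_const measurable_const
  have hZint : ∀ x, Integrable (Zind Y x) P := by
    intro x
    refine (integrable_const (1:ℝ)).mono' (hZm x).aestronglyMeasurable ?_
    exact Filter.Eventually.of_forall fun ω => by
      rw [Real.norm_eq_abs, abs_of_nonneg (hZ0 x ω)]; exact hZ1 x ω
  have hS0 : ∀ ω, 0 ≤ S ω := fun ω =>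
    Finset.sum_nonneg fun x _ => mul_nonneg (hh x) (hZ0 x ω)
  have hSH : ∀ ω, S ω ≤ H := fun ω => by
    refine Finset.sum_le_sum fun x _ => ?_
    calc h x * Zind Y x ω ≤ h x * 1 := by
          exact mul_le_mul_of_nonneg_left (hZ1 x ω) (hh x)
      _ = h x := mul_one _
  have hSm : Measurable S := by
    apply Finset.measurable_sum
    intro x _
    exact (hZm x).const_mul _
  have hSint : Integrable S P := integrable_finset_sum _ fun x _ => (hZint x).const_mul _
  -- expectation of Zind
  have key : ∀ x : Fin n → Fin b, ∫ ω, Zind Y x ω ∂P = q := by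
    intro x
    set v : Fin n → TreeVertex b n := fun k =>
      ⟨k, fun i => x ⟨(i : ℕ), lt_of_lt_of_le i.isLt (Nat.succ_le_of_lt k.isLt)⟩⟩ with hvdef
    have hvinj : Function.Injective v := fun a b hab => congrArg Sigma.fst hab
    have hZeq : ∀ ω, Zind Y x ω = Set.indicator (⋂ k : Fin n, Y (v k) ⁻¹' {true})
        (fun _ => (1:ℝ)) ω := by
      intro ω
      rw [Zind, Fintype.prod_boole]
      by_cases hc : ∀ k : Fin n, Y (v k) ω = true
      · rw [if_pos, Set.indicator_of_mem]
        · simp only [Set.mem_iInter, Set.mem_preimage, Set.mem_singleton_iff]; exact hc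
        · exact hc
      · rw [if_neg hc, Set.indicator_of_notMem]
        simpa only [Set.mem_iInter, Set.mem_preimage, Set.mem_singleton_iff] using hc
    have hEmeas : MeasurableSet (⋂ k : Fin n, Y (v k) ⁻¹' {true}) :=
      MeasurableSet.iInter fun k => (hYm (v k)) (by simp)
    have hmeasInter : P (⋂ k : Fin n, Y (v k) ⁻¹' {true}) = ENNReal.ofReal q := by
      have hrw : (⋂ k : Fin n, Y (v k) ⁻¹' {true}) =
          ⋂ w ∈ Finset.image v Finset.univ, Y w ⁻¹' {true} := by
        simp
      rw [hrw, hind.meas_biInter (S := Finset.image v Finset.univ)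
          (s := fun w => Y w ⁻¹' {true}) ?_]
      · rw [Finset.prod_image (fun a _ c _ hac => hvinj hac)]
        have hlaw' : ∀ k : Fin n, P (Y (v k) ⁻¹' {true}) = ENNReal.ofReal (p (k + 1)) := by
          intro k
          have := hlaw (v k)
          simpa [Set.preimage, hvdef] using this
        rw [Finset.prod_congr rfl fun k _ => hlaw' k]
        rw [← ENNReal.ofReal_prod_of_nonneg]
        · congr 1
          rw [hqdef, Fin.prod_univ_eq_prod_range (fun k => p (k+1)) n, ← Finset.Ico_add_one_right_eq_Icc,
            Finset.prod_Ico_eq_prod_range]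
          simp [add_comm]
        · intro k _
          exact (hp (k + 1) (Nat.le_add_left 1 k) (Nat.succ_le_of_lt k.isLt)).1.le
      · intro w _
        exact ⟨{true}, by simp, rfl⟩
    calc ∫ ω, Zind Y x ω ∂P
        = ∫ ω, Set.indicator (⋂ k : Fin n, Y (v k) ⁻¹' {true}) (fun _ => (1:ℝ)) ω ∂P := by
          exact integral_congr_ae (Filter.Eventually.of_forall hZeq)
      _ = (P (⋂ k : Fin n, Y (v k) ⁻¹' {true})).toReal := integral_indicator_one hEmeas
      _ = q := by rw [hmeasInter, ENNReal.toReal_ofReal hq0.le]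
  -- expectation of S
  have hES : ∫ ω, S ω ∂P = q * H := by
    rw [hSdef]
    rw [integral_finset_sum _ fun x _ => (hZint x).const_mul _]
    simp_rw [MeasureTheory.integral_const_mul, key]
    rw [hHdef, Finset.mul_sum]
    exact Finset.sum_congr rfl fun x _ => mul_comm _ _
  -- integrability of squares etc.
  have hS2int : Integrable (fun ω => (S ω)^2) P := by
    refine (integrable_const (H^2)).mono' ((hSm.pow_const 2).aestronglyMeasurable) ?_
    refine Filter.Eventually.of_forall fun ω => ?_
    rw [Real.norm_eq_abs, abs_of_nonneg (sq_nonneg _)]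
    exact pow_le_pow_left₀ (hS0 ω) (hSH ω) 2
  have hD2int : Integrable (fun ω => (S ω - q*H)^2) P := by
    refine (integrable_const ((H + q*H)^2)).mono'
      (((hSm.sub measurable_const).pow_const 2).aestronglyMeasurable) ?_
    refine Filter.Eventually.of_forall fun ω => ?_
    rw [Real.norm_eq_abs, abs_of_nonneg (sq_nonneg _)]
    have h1 : |S ω - q*H| ≤ H + q*H := by
      rw [abs_le]
      constructor <;> nlinarith [hS0 ω, hSH ω, hH0, hq0.le, hq1]
    calc (S ω - q*H)^2 = |S ω - q*H|^2 := (sq_abs _).symm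
      _ ≤ (H + q*H)^2 := by
        apply pow_le_pow_left₀ (abs_nonneg _) h1
  have hExpInt : Integrable (fun ω => Real.exp (-S ω)) P := by
    refine (integrable_const (1:ℝ)).mono'
      ((Real.measurable_exp.comp hSm.neg).aestronglyMeasurable) ?_
    refine Filter.Eventually.of_forall fun ω => ?_
    rw [Real.norm_eq_abs, abs_of_nonneg (Real.exp_pos _).le]
    exact Real.exp_le_one_iff.mpr (neg_nonpos.mpr (hS0 ω))
  rcases eq_or_lt_of_le hH0 with hHeq | hHpos
  · -- degenerate case H = 0
    have hx0 : ∀ x, h x = 0 := fun x =>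
      (Finset.sum_eq_zero_iff_of_nonneg (fun x _ => hh x)).mp hHeq.symm x (Finset.mem_univ x)
    have hone : ∀ ω, Real.exp (-∑ x, h x * Zind Y x ω) = 1 := by
      intro ω; simp [hx0]
    rw [integral_congr_ae (Filter.Eventually.of_forall hone), integral_const]
    simp only [measure_univ, probReal_univ, ENNReal.toReal_one, smul_eq_mul, one_mul]
    have hexp1 : Real.exp (-(1 - lam) * q * H) = 1 := by
      rw [← hHeq, mul_zero, Real.exp_zero]
    rw [hexp1]
    have : 0 ≤ 1 / lam ^ 2 * ((1 - q) / q) :=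
      mul_nonneg (by positivity) (div_nonneg (by linarith) hq0.le)
    linarith
  · -- main case H > 0
    set c := (1 - lam) * q * H with hcdef
    set A := {ω | S ω ≤ c} with hAdef
    have hAm : MeasurableSet A := hSm measurableSet_Iic
    have hIndInt : Integrable (A.indicator (fun _ => (1:ℝ))) P :=
      (integrable_const (1:ℝ)).indicator hAm
    -- second moment bound
    have hES2 : ∫ ω, (S ω)^2 ∂P ≤ q * H^2 := by
      have hpt : ∀ ω, (S ω)^2 ≤ H * S ω := fun ω => by
        rw [sq]; exact mul_le_mul_of_nonneg_right (hSH ω) (hS0 ω)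
      calc ∫ ω, (S ω)^2 ∂P ≤ ∫ ω, H * S ω ∂P :=
            integral_mono hS2int (hSint.const_mul H) hpt
        _ = H * (q * H) := by rw [MeasureTheory.integral_const_mul, hES]
        _ = q * H^2 := by ring
    -- variance bound
    have hVar : ∫ ω, (S ω - q*H)^2 ∂P ≤ q * (1-q) * H^2 := by
      have hexpand : (fun ω => (S ω - q*H)^2) =
          fun ω => (S ω)^2 - (2*(q*H)) * S ω + (q*H)^2 := by
        funext ω; ring
      have h1 : Integrable (fun ω => (S ω)^2 - (2*(q*H)) * S ω) P :=
        hS2int.sub (hSint.const_mul _)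
      rw [hexpand, integral_add h1 (integrable_const _),
        integral_sub hS2int (hSint.const_mul _), MeasureTheory.integral_const_mul, hES,
        integral_const]
      simp only [measure_univ, probReal_univ, ENNReal.toReal_one, smul_eq_mul, one_mul]
      nlinarith [hES2]
    -- Chebyshev
    have hd : (0:ℝ) < lam * (q*H) := mul_pos hlam0 (mul_pos hq0 hHpos)
    have hQuotInt : Integrable (fun ω => (S ω - q*H)^2 / (lam*(q*H))^2) P := by
      simpa [div_eq_mul_inv] using hD2int.mul_const ((lam*(q*H))^2)⁻¹
    have hcheb : (P A).toReal ≤ (1-q)/(lam^2*q) := by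
      have hpt : ∀ ω, A.indicator (fun _ => (1:ℝ)) ω ≤ (S ω - q*H)^2 / (lam*(q*H))^2 := by
        intro ω
        by_cases hω : ω ∈ A
        · rw [Set.indicator_of_mem hω]
          rw [le_div_iff₀ (pow_pos hd 2)]
          have h1 : S ω ≤ (1-lam)*q*H := hω
          nlinarith
        · rw [Set.indicator_of_notMem hω]; positivity
      calc (P A).toReal = ∫ ω, A.indicator (fun _ => (1:ℝ)) ω ∂P :=
            (integral_indicator_one hAm).symm
        _ ≤ ∫ ω, (S ω - q*H)^2 / (lam*(q*H))^2 ∂P := integral_mono hIndInt hQuotInt hpt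
        _ = (∫ ω, (S ω - q*H)^2 ∂P) / (lam*(q*H))^2 := by
            simp_rw [div_eq_mul_inv]
            rw [MeasureTheory.integral_mul_const]
        _ ≤ (q*(1-q)*H^2) / (lam*(q*H))^2 :=
            div_le_div_of_nonneg_right hVar (by positivity) |>.trans_eq rfl
        _ = (1-q)/(lam^2*q) := by
            field_simp
    -- pointwise exponential bound
    have hfinal : ∀ ω, Real.exp (-S ω) ≤ A.indicator (fun _ => (1:ℝ)) ω + Real.exp (-c) := by
      intro ω
      by_cases hω : ω ∈ A
      · rw [Set.indicator_of_mem hω]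
        have h1 : Real.exp (-S ω) ≤ 1 := Real.exp_le_one_iff.mpr (neg_nonpos.mpr (hS0 ω))
        linarith [(Real.exp_pos (-c)).le]
      · rw [Set.indicator_of_notMem hω, zero_add]
        apply Real.exp_le_exp.mpr
        have : ¬ S ω ≤ c := hω
        linarith [lt_of_not_ge this]
    have hgoal : ∫ ω, Real.exp (-S ω) ∂P ≤ (1-q)/(lam^2*q) + Real.exp (-c) := by
      calc ∫ ω, Real.exp (-S ω) ∂P
          ≤ ∫ ω, (A.indicator (fun _ => (1:ℝ)) ω + Real.exp (-c)) ∂P :=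
            integral_mono hExpInt (hIndInt.add (integrable_const _)) hfinal
        _ = (P A).toReal + Real.exp (-c) := by
            rw [integral_add hIndInt (integrable_const _), integral_const]
            simp only [measure_univ, probReal_univ, ENNReal.toReal_one, smul_eq_mul, one_mul]
            congr 1
            exact integral_indicator_one hAm
        _ ≤ (1-q)/(lam^2*q) + Real.exp (-c) := by linarith
    have heq1 : (1-q)/(lam^2*q) = 1 / lam ^ 2 * ((1 - q) / q) := by
      field_simp
    have heq2 : -c = -(1 - lam) * q * H := by rw [hcdef]; ring
    calc ∫ ω, Real.exp (-∑ x, h x * Zind Y x ω) ∂P = ∫ ω, Real.exp (-S ω) ∂P := rfl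
      _ ≤ (1-q)/(lam^2*q) + Real.exp (-c) := hgoal
      _ = 1 / lam ^ 2 * ((1 - q) / q) + Real.exp (-(1 - lam) * q * H) := by
          rw [heq1, heq2]
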